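/- Let H be a Banach space, L a Banach space, and for z in the open unit disk 𝔻 let r(z) = Σ_{i≥0} r_i z^i be a power series of bounded linear operators H → L with ‖r_i‖ ≤ 1 for all i. Suppose r(0) is surjective with interpolation constant h ≥ 1, meaning: for every v ∈ L with ‖v‖ ≤ 1 there exists u ∈ H with r(0)u = v and ‖u‖ ≤ 2h. Then for every z with |z| < 1/(4h) and every v ∈ L with ‖v‖ ≤ 1, there exists u(z) ∈ H with r(z)(u(z)) = v and ‖u(z)‖ ≤ 8h. -/

import Mathlib

/-- If `r(z) = Σ rᵢ zⁱ` is a power series of operators `H → L` with `‖rᵢ‖ ≤ 1`, and `r 0`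
is surjective with interpolation constant `h ≥ 1` (every `v` with `‖v‖ ≤ 1` has a preimage
of norm `≤ 2h`), then for `|z| < 1/(4h)` every `v` with `‖v‖ ≤ 1` has a preimage under
`r z` of norm `≤ 8h`. -/
theorem stmt_6 (H L : Type*) [NormedAddCommGroup H] [NormedSpace ℂ H] [CompleteSpace H]
    [NormedAddCommGroup L] [NormedSpace ℂ L] [CompleteSpace L]
    (r : ℕ → (H →L[ℂ] L)) (hr : ∀ i, ‖r i‖ ≤ 1)
    (h : ℝ) (hh : 1 ≤ h)
    (h0 : ∀ v : L, ‖v‖ ≤ 1 → ∃ u : H, r 0 u = v ∧ ‖u‖ ≤ 2 * h) :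
    ∀ z : ℂ, ‖z‖ < 1 / (4 * h) → ∀ v : L, ‖v‖ ≤ 1 →
      ∃ u : H, (∑' i : ℕ, z ^ i • r i u) = v ∧ ‖u‖ ≤ 8 * h := by
  intro z hz v hv
  have hpos : (0:ℝ) < h := lt_of_lt_of_le one_pos hh
  set q : ℝ := ‖z‖ with hq
  have hq0 : 0 ≤ q := norm_nonneg z
  have hq4 : q < 1 / (4 * h) := hz
  have h4h : 1 / (4 * h) ≤ 1 / 4 := by
    apply one_div_le_one_div_of_le (by norm_num)
    linarith
  have hq14 : q < 1/4 := lt_of_lt_of_le hq4 (by linarith)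
  have hq1 : q < 1 := by linarith
  -- choice function for preimages with norm bound
  have hf : ∀ w : L, ∃ u : H, r 0 u = w ∧ ‖u‖ ≤ 2 * h * ‖w‖ := by
    intro w
    rcases eq_or_ne w 0 with rfl | hw
    · exact ⟨0, by simp, by simp⟩
    · have hwn : (0:ℝ) < ‖w‖ := norm_pos_iff.mpr hw
      obtain ⟨u, hu1, hu2⟩ := h0 ((‖w‖:ℂ)⁻¹ • w) (by
        rw [norm_smul]; simp [abs_of_pos hwn]
        rw [inv_mul_cancel₀ hwn.ne'])
      refine ⟨(‖w‖:ℂ) • u, ?_, ?_⟩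
      · rw [map_smul, hu1, smul_smul, mul_inv_cancel₀ (by exact_mod_cast hwn.ne'), one_smul]
      · rw [norm_smul]
        simp only [Complex.norm_real, Real.norm_eq_abs, abs_of_pos hwn]
        calc ‖w‖ * ‖u‖ ≤ ‖w‖ * (2*h) := by
              exact mul_le_mul_of_nonneg_left hu2 hwn.le
          _ = 2 * h * ‖w‖ := by ring
  choose f hf1 hf2 using hf
  -- the operator R = ∑ z^i • r i
  have hsumop : Summable (fun i => z ^ i • r i) := by
    apply Summable.of_norm_bounded (summable_geometric_of_lt_one hq0 hq1)
    intro i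
    calc ‖z ^ i • r i‖ ≤ ‖z ^ i‖ * ‖r i‖ := ContinuousLinearMap.opNorm_smul_le _ _
      _ ≤ ‖z‖ ^ i * 1 := by
          rw [norm_pow]
          exact mul_le_mul_of_nonneg_left (hr i) (by positivity)
      _ = q ^ i := by rw [mul_one]
  set R : H →L[ℂ] L := ∑' i, z ^ i • r i with hR
  have hRapply : ∀ u : H, R u = ∑' i, z ^ i • r i u := by
    intro u
    have := (ContinuousLinearMap.apply ℂ L u).map_tsum hsumop
    simpa using this
  -- bound ‖R - r 0‖ ≤ 1/(3h)
  have htail : ‖R - r 0‖ ≤ 1 / (3 * h) := by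
    have h1 : R = z ^ 0 • r 0 + ∑' i, z ^ (i+1) • r (i+1) := Summable.tsum_eq_zero_add hsumop
    have h2 : R - r 0 = ∑' i, z ^ (i+1) • r (i+1) := by
      rw [h1]; simp
    rw [h2]
    have hgeo : HasSum (fun i => q ^ (i+1)) (q * (1 - q)⁻¹) := by
      have := (hasSum_geometric_of_lt_one hq0 hq1).mul_left q
      convert this using 2 with i
      · rfl
      · ring
    have hinv : (1 - q)⁻¹ ≤ 4/3 := by
      have h34 : (3:ℝ)/4 ≤ 1 - q := by linarith
      calc (1 - q)⁻¹ ≤ ((3:ℝ)/4)⁻¹ := by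
            apply inv_anti₀ (by norm_num) h34
        _ = 4/3 := by norm_num
    calc ‖∑' i, z ^ (i+1) • r (i+1)‖ ≤ q * (1 - q)⁻¹ := by
          apply tsum_of_norm_bounded hgeo
          intro i
          calc ‖z ^ (i+1) • r (i+1)‖ ≤ ‖z ^ (i+1)‖ * ‖r (i+1)‖ := ContinuousLinearMap.opNorm_smul_le _ _
            _ ≤ ‖z‖ ^ (i+1) * 1 := by
                rw [norm_pow]
                exact mul_le_mul_of_nonneg_left (hr (i+1)) (by positivity)
            _ = q ^ (i+1) := by rw [mul_one]
      _ ≤ (1 / (4 * h)) * (4/3) :=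
          mul_le_mul hq4.le hinv (inv_nonneg.mpr (by linarith)) (by positivity)
      _ = 1 / (3 * h) := by field_simp
  -- iterate
  set w : ℕ → L := fun n => Nat.rec v (fun _ wn => wn - R (f wn)) n with hw
  have hw0 : w 0 = v := rfl
  have hwsucc : ∀ n, w (n+1) = w n - R (f (w n)) := fun n => rfl
  have hwnorm : ∀ n, ‖w n‖ ≤ (2/3) ^ n := by
    intro n
    induction n with
    | zero => simpa [hw0] using hv
    | succ n ih =>
      rw [hwsucc]
      have : w n - R (f (w n)) = -((R - r 0) (f (w n))) := by
        simp [ContinuousLinearMap.sub_apply, hf1 (w n)]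
      rw [this, norm_neg]
      calc ‖(R - r 0) (f (w n))‖ ≤ ‖R - r 0‖ * ‖f (w n)‖ :=
            (R - r 0).le_opNorm _
        _ ≤ (1 / (3*h)) * (2 * h * ‖w n‖) := by
            apply mul_le_mul htail (hf2 _) (norm_nonneg _)
            positivity
        _ = (2/3) * ‖w n‖ := by field_simp
        _ ≤ (2/3) * (2/3) ^ n := by
            apply mul_le_mul_of_nonneg_left ih; norm_num
        _ = (2/3) ^ (n+1) := by ring
  have hunorm : ∀ n, ‖f (w n)‖ ≤ 2 * h * (2/3) ^ n := by
    intro n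
    calc ‖f (w n)‖ ≤ 2 * h * ‖w n‖ := hf2 _
      _ ≤ 2 * h * (2/3)^n := by
          apply mul_le_mul_of_nonneg_left (hwnorm n); positivity
  have hsumu : Summable (fun n => f (w n)) := by
    apply Summable.of_norm_bounded (g := fun n => 2 * h * (2/3)^n)
    · exact (summable_geometric_of_lt_one (by norm_num) (by norm_num)).mul_left _
    · exact hunorm
  refine ⟨∑' n, f (w n), ?_, ?_⟩
  · rw [← hRapply]
    rw [R.map_tsum hsumu]
    have hg : ∀ n, R (f (w n)) = w n - w (n+1) := by
      intro n; rw [hwsucc]; abel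
    have hsumg : Summable (fun n => R (f (w n))) := hsumu.map R R.continuous
    have htend := hsumg.hasSum.tendsto_sum_nat
    have hpart : ∀ N, ∑ n ∈ Finset.range N, R (f (w n)) = v - w N := by
      intro N
      calc ∑ n ∈ Finset.range N, R (f (w n))
          = ∑ n ∈ Finset.range N, (w n - w (n+1)) := by
            apply Finset.sum_congr rfl; intro n _; exact hg n
        _ = w 0 - w N := Finset.sum_range_sub' w N
        _ = v - w N := by rw [hw0]
    have hwlim : Filter.Tendsto w Filter.atTop (nhds 0) := by
      apply squeeze_zero_norm hwnorm
      simpa using tendsto_pow_atTop_nhds_zero_of_lt_one (by norm_num : (0:ℝ) ≤ 2/3) (by norm_num)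
    have htend2 : Filter.Tendsto (fun N => ∑ n ∈ Finset.range N, R (f (w n)))
        Filter.atTop (nhds v) := by
      simp only [hpart]
      simpa using Filter.Tendsto.const_sub v hwlim
    exact tendsto_nhds_unique htend htend2
  · calc ‖∑' n, f (w n)‖ ≤ ∑' n, (2 * h * (2/3)^n) :=
        tsum_of_norm_bounded (((summable_geometric_of_lt_one (by norm_num)
          (by norm_num)).mul_left (2*h)).hasSum) hunorm
      _ = 2 * h * (1 - 2/3)⁻¹ := by
          rw [tsum_mul_left, tsum_geometric_of_lt_one (by norm_num) (by norm_num)]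
      _ = 6 * h := by norm_num; ring
      _ ≤ 8 * h := by linarith
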